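/- Suppose there exist real constants α, β, γ and a bounded measurable function ψ : S_X → ℝ such that for every x ∈ S_X and y ∈ S_Y: (α f_X(x) + β f_Y(x) + γ) + λ (α g_X(y) + β g_Y(y) + γ) = ψ(x) − λ² ∫_{S_X} ψ(s) dσ_X[x,y](s) − (1−λ²) ∫_{S_X} ψ(s) dσ_X^0(s). Then for every play distribution (ν_t)_{t≥0} consistent with (σ_X^0, σ_X), the average payoffs π_X := (1−λ) ∑_{t=0}^∞ λ^{2t} ∫_{S_X×S_Y} (f_X(x) + λ g_X(y)) dν_t(x,y) and π_Y := (1−λ) ∑_{t=0}^∞ λ^{2t} ∫_{S_X×S_Y} (f_Y(x) + λ g_Y(y)) dν_t(x,y) satisfy α π_X + β π_Y + γ = 0. In other words, if player X moves first, the memory-one strategy (σ_X^0, σ_X) unilaterally enforces α π_X + β π_Y + γ = 0 for every strategy of player Y. -/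

import Mathlib

open MeasureTheory
open scoped ProbabilityTheory

lemma integrable_of_bdd {Ω : Type*} [MeasurableSpace Ω] (μ : Measure Ω) [IsFiniteMeasure μ]
    {f : Ω → ℝ} (hf : Measurable f) (D : ℝ) (hD : ∀ ω, |f ω| ≤ D) : Integrable f μ := by
  refine Integrable.mono' (integrable_const D) hf.aestronglyMeasurable
    (Filter.Eventually.of_forall fun ω => ?_)
  simpa [Real.norm_eq_abs] using hD ω

lemma abs_integral_le_of_bdd {Ω : Type*} [MeasurableSpace Ω] (μ : Measure Ω)
    [IsProbabilityMeasure μ] {f : Ω → ℝ} (D : ℝ) (hD : ∀ ω, |f ω| ≤ D) :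
    |∫ ω, f ω ∂μ| ≤ D := by
  have := norm_integral_le_of_norm_le_const (μ := μ) (f := f) (C := D)
    (Filter.Eventually.of_forall fun ω => by simpa [Real.norm_eq_abs] using hD ω)
  simpa [Real.norm_eq_abs] using this

lemma integral_comb {Ω : Type*} [MeasurableSpace Ω] (μ : Measure Ω) [IsProbabilityMeasure μ]
    {u v : Ω → ℝ} (hu : Integrable u μ) (hv : Integrable v μ) (c d e : ℝ) :
    ∫ ω, (c * u ω + d * v ω + e) ∂μ = c * (∫ ω, u ω ∂μ) + d * (∫ ω, v ω ∂μ) + e := by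
  have h1 : Integrable (fun ω => c * u ω + d * v ω) μ := (hu.const_mul c).add (hv.const_mul d)
  rw [integral_add h1 (integrable_const e), integral_add (hu.const_mul c) (hv.const_mul d),
    integral_const_mul, integral_const_mul, integral_const]
  simp

lemma integral_comb2 {Ω : Type*} [MeasurableSpace Ω] (μ : Measure Ω) [IsProbabilityMeasure μ]
    {u v : Ω → ℝ} (hu : Integrable u μ) (hv : Integrable v μ) (c e : ℝ) :
    ∫ ω, (u ω - c * v ω - e) ∂μ = (∫ ω, u ω ∂μ) - c * (∫ ω, v ω ∂μ) - e := by
  have h1 : Integrable (fun ω => u ω - c * v ω) μ := hu.sub (hv.const_mul c)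
  rw [integral_sub h1 (integrable_const e), integral_sub hu (hv.const_mul c),
    integral_const_mul, integral_const]
  simp

/-- Autocratic strategies for strictly-alternating games in which `X` moves
first: if the functional identity holds for some bounded measurable `ψ`, then
the memory-one strategy `(σX0, σX)` unilaterally enforces
`α π_X + β π_Y + γ = 0` for every strategy of player `Y` (i.e. for every
consistent play distribution). -/
theorem stmt_2
    {SX SY : Type*} [MeasurableSpace SX] [MeasurableSpace SY]
    (lam : ℝ) (hlam0 : 0 < lam) (hlam1 : lam < 1)
    (fX fY : SX → ℝ) (gX gY : SY → ℝ)
    (hfXm : Measurable fX) (hfYm : Measurable fY)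
    (hgXm : Measurable gX) (hgYm : Measurable gY)
    (Cf : ℝ) (hfXb : ∀ x, |fX x| ≤ Cf) (hfYb : ∀ x, |fY x| ≤ Cf)
    (hgXb : ∀ y, |gX y| ≤ Cf) (hgYb : ∀ y, |gY y| ≤ Cf)
    (σX0 : Measure SX) [IsProbabilityMeasure σX0]
    (σX : ProbabilityTheory.Kernel (SX × SY) SX) [ProbabilityTheory.IsMarkovKernel σX]
    (α β γ : ℝ)
    (ψ : SX → ℝ) (hψm : Measurable ψ) (C : ℝ) (hψb : ∀ s, |ψ s| ≤ C)
    (hid : ∀ (x : SX) (y : SY),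
      (α * fX x + β * fY x + γ) + lam * (α * gX y + β * gY y + γ) =
        ψ x - lam ^ 2 * (∫ s, ψ s ∂(σX (x, y)))
          - (1 - lam ^ 2) * (∫ s, ψ s ∂σX0))
    (ν : ℕ → Measure (SX × SY)) (hν : ∀ t, IsProbabilityMeasure (ν t))
    (hν0 : ∀ E : Set SX, MeasurableSet E →
      ν 0 (E ×ˢ (Set.univ : Set SY)) = σX0 E)
    (hνsucc : ∀ (t : ℕ) (E : Set SX), MeasurableSet E →
      ν (t + 1) (E ×ˢ (Set.univ : Set SY)) = ∫⁻ q, σX q E ∂(ν t)) :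
    α * ((1 - lam) * ∑' t : ℕ, lam ^ (2 * t) *
          ∫ q, (fX q.1 + lam * gX q.2) ∂(ν t))
      + β * ((1 - lam) * ∑' t : ℕ, lam ^ (2 * t) *
          ∫ q, (fY q.1 + lam * gY q.2) ∂(ν t))
      + γ = 0 := by
  haveI := hν
  have hr0 : (0:ℝ) ≤ lam ^ 2 := sq_nonneg lam
  have hr1 : lam ^ 2 < 1 := by nlinarith
  set K : ℝ := ∫ s, ψ s ∂σX0 with hK
  set a : ℕ → ℝ := fun t => ∫ q, ψ q.1 ∂(ν t) with ha
  -- measurability of the kernel integral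
  have hGm : StronglyMeasurable fun q : SX × SY => ∫ s, ψ s ∂(σX q) :=
    StronglyMeasurable.integral_kernel_prod_right' (κ := σX)
      (f := fun p : (SX × SY) × SX => ψ p.2)
      ((hψm.comp measurable_snd).stronglyMeasurable)
  have hGb : ∀ q : SX × SY, |∫ s, ψ s ∂(σX q)| ≤ C := fun q =>
    abs_integral_le_of_bdd (σX q) C hψb
  -- step A : a 0 = K
  have hmap0 : (ν 0).map Prod.fst = σX0 := by
    ext E hE
    rw [Measure.map_apply measurable_fst hE, ← hν0 E hE]
    congr 1
    ext q; simp
  have ha0 : a 0 = K := by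
    have h : ∫ s, ψ s ∂((ν 0).map Prod.fst) = ∫ q, ψ q.1 ∂(ν 0) :=
      integral_map measurable_fst.aemeasurable hψm.aestronglyMeasurable
    rw [hmap0] at h
    simp only [ha, hK]
    rw [← h]
  -- step B : a (t+1) equals the integral of the kernel integral
  have hkey : ∀ t, ∫ q, (∫ s, ψ s ∂(σX q)) ∂(ν t) = a (t + 1) := by
    intro t
    have hmaps : ((ν t) ⊗ₘ σX).map Prod.snd = (ν (t+1)).map Prod.fst := by
      ext E hE
      rw [Measure.map_apply measurable_snd hE, Measure.map_apply measurable_fst hE]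
      have h1 : Prod.snd ⁻¹' E = (Set.univ : Set (SX × SY)) ×ˢ E := by ext q; simp
      have h2 : Prod.fst ⁻¹' E = E ×ˢ (Set.univ : Set SY) := by ext q; simp
      rw [h1, h2, Measure.compProd_apply_prod MeasurableSet.univ hE, hνsucc t E hE,
        setLIntegral_univ]
    have hint : Integrable (fun p : (SX × SY) × SX => ψ p.2) ((ν t) ⊗ₘ σX) :=
      integrable_of_bdd _ (hψm.comp measurable_snd) C (fun p => hψb p.2)
    calc ∫ q, (∫ s, ψ s ∂(σX q)) ∂(ν t)
        = ∫ p, ψ p.2 ∂((ν t) ⊗ₘ σX) := (Measure.integral_compProd hint).symm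
      _ = ∫ s, ψ s ∂(((ν t) ⊗ₘ σX).map Prod.snd) :=
          (integral_map measurable_snd.aemeasurable hψm.aestronglyMeasurable).symm
      _ = ∫ s, ψ s ∂((ν (t+1)).map Prod.fst) := by rw [hmaps]
      _ = a (t + 1) :=
          integral_map measurable_fst.aemeasurable hψm.aestronglyMeasurable
  -- per-round identity
  have hround : ∀ t, α * (∫ q, (fX q.1 + lam * gX q.2) ∂(ν t))
      + β * (∫ q, (fY q.1 + lam * gY q.2) ∂(ν t)) + γ * (1 + lam)
      = a t - lam ^ 2 * a (t + 1) - (1 - lam ^ 2) * K := by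
    intro t
    have hintX : Integrable (fun q : SX × SY => fX q.1 + lam * gX q.2) (ν t) :=
      integrable_of_bdd _ ((hfXm.comp measurable_fst).add
        ((hgXm.comp measurable_snd).const_mul lam)) ((1 + lam) * Cf) (fun q => by
          have h1 := hfXb q.1; have h2 := hgXb q.2
          have := abs_add_le (fX q.1) (lam * gX q.2)
          rw [abs_mul, abs_of_pos hlam0] at this
          nlinarith)
    have hintY : Integrable (fun q : SX × SY => fY q.1 + lam * gY q.2) (ν t) :=
      integrable_of_bdd _ ((hfYm.comp measurable_fst).add
        ((hgYm.comp measurable_snd).const_mul lam)) ((1 + lam) * Cf) (fun q => by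
          have h1 := hfYb q.1; have h2 := hgYb q.2
          have := abs_add_le (fY q.1) (lam * gY q.2)
          rw [abs_mul, abs_of_pos hlam0] at this
          nlinarith)
    have hintψ : Integrable (fun q : SX × SY => ψ q.1) (ν t) :=
      integrable_of_bdd _ (hψm.comp measurable_fst) C (fun q => hψb q.1)
    have hintG : Integrable (fun q : SX × SY => ∫ s, ψ s ∂(σX q)) (ν t) := by
      refine Integrable.mono' (integrable_const C) hGm.aestronglyMeasurable
        (Filter.Eventually.of_forall fun q => ?_)
      simpa [Real.norm_eq_abs] using hGb q
    have heq : ∀ q : SX × SY,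
        α * (fX q.1 + lam * gX q.2) + β * (fY q.1 + lam * gY q.2) + γ * (1 + lam)
        = ψ q.1 - lam ^ 2 * (∫ s, ψ s ∂(σX q)) - (1 - lam ^ 2) * K := by
      intro q
      have h := hid q.1 q.2
      have : α * (fX q.1 + lam * gX q.2) + β * (fY q.1 + lam * gY q.2) + γ * (1 + lam)
          = (α * fX q.1 + β * fY q.1 + γ) + lam * (α * gX q.2 + β * gY q.2 + γ) := by ring
      rw [this, h]
    have hL : ∫ q, (α * (fX q.1 + lam * gX q.2) + β * (fY q.1 + lam * gY q.2)
          + γ * (1 + lam)) ∂(ν t)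
        = α * (∫ q, (fX q.1 + lam * gX q.2) ∂(ν t))
          + β * (∫ q, (fY q.1 + lam * gY q.2) ∂(ν t)) + γ * (1 + lam) :=
      integral_comb (ν t) hintX hintY α β (γ * (1 + lam))
    have hR : ∫ q, (ψ q.1 - lam ^ 2 * (∫ s, ψ s ∂(σX q)) - (1 - lam ^ 2) * K) ∂(ν t)
        = a t - lam ^ 2 * a (t + 1) - (1 - lam ^ 2) * K := by
      rw [integral_comb2 (ν t) hintψ hintG (lam ^ 2) ((1 - lam ^ 2) * K), hkey t]
    rw [← hL, ← hR]
    exact integral_congr_ae (Filter.Eventually.of_forall heq)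
  -- summability
  have hgeo : Summable fun t : ℕ => (lam ^ 2) ^ t := summable_geometric_of_lt_one hr0 hr1
  have haB : ∀ t, |a t| ≤ C := fun t => abs_integral_le_of_bdd (ν t) C (fun q => hψb q.1)
  have hSuma : Summable fun t : ℕ => (lam ^ 2) ^ t * a t := by
    refine Summable.of_norm_bounded (hgeo.mul_right C) (fun t => ?_)
    rw [Real.norm_eq_abs, abs_mul, abs_of_nonneg (pow_nonneg hr0 t)]
    exact mul_le_mul_of_nonneg_left (haB t) (pow_nonneg hr0 t)
  have hSuma1 : Summable fun t : ℕ => (lam ^ 2) ^ (t + 1) * a (t + 1) :=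
    (summable_nat_add_iff 1).mpr hSuma
  have hSumX : Summable fun t : ℕ => lam ^ (2 * t) * ∫ q, (fX q.1 + lam * gX q.2) ∂(ν t) := by
    refine Summable.of_norm_bounded (hgeo.mul_right ((1 + lam) * Cf)) (fun t => ?_)
    rw [Real.norm_eq_abs, abs_mul, pow_mul, abs_of_nonneg (pow_nonneg hr0 t)]
    refine mul_le_mul_of_nonneg_left ?_ (pow_nonneg hr0 t)
    refine abs_integral_le_of_bdd (ν t) _ (fun q => ?_)
    have h1 := hfXb q.1; have h2 := hgXb q.2
    have := abs_add_le (fX q.1) (lam * gX q.2)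
    rw [abs_mul, abs_of_pos hlam0] at this
    nlinarith
  have hSumY : Summable fun t : ℕ => lam ^ (2 * t) * ∫ q, (fY q.1 + lam * gY q.2) ∂(ν t) := by
    refine Summable.of_norm_bounded (hgeo.mul_right ((1 + lam) * Cf)) (fun t => ?_)
    rw [Real.norm_eq_abs, abs_mul, pow_mul, abs_of_nonneg (pow_nonneg hr0 t)]
    refine mul_le_mul_of_nonneg_left ?_ (pow_nonneg hr0 t)
    refine abs_integral_le_of_bdd (ν t) _ (fun q => ?_)
    have h1 := hfYb q.1; have h2 := hgYb q.2
    have := abs_add_le (fY q.1) (lam * gY q.2)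
    rw [abs_mul, abs_of_pos hlam0] at this
    nlinarith
  -- the telescoping sum
  have htel : ∑' t : ℕ, ((lam ^ 2) ^ t * a t - (lam ^ 2) ^ (t + 1) * a (t + 1)
      - (1 - lam ^ 2) * K * (lam ^ 2) ^ t) = 0 := by
    have hSumK : Summable fun t : ℕ => (1 - lam ^ 2) * K * (lam ^ 2) ^ t :=
      hgeo.mul_left _
    rw [Summable.tsum_sub (hSuma.sub hSuma1) hSumK, Summable.tsum_sub hSuma hSuma1]
    have h1 : ∑' t : ℕ, (lam ^ 2) ^ (t + 1) * a (t + 1)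
        = (∑' t : ℕ, (lam ^ 2) ^ t * a t) - a 0 := by
      have := Summable.tsum_eq_zero_add hSuma
      simp only [pow_zero, one_mul] at this
      linarith [this]
    have h2 : ∑' t : ℕ, (1 - lam ^ 2) * K * (lam ^ 2) ^ t
        = (1 - lam ^ 2) * K * (1 - lam ^ 2)⁻¹ := by
      rw [tsum_mul_left, tsum_geometric_of_lt_one hr0 hr1]
    have hne : (1 : ℝ) - lam ^ 2 ≠ 0 := by linarith
    rw [h1, h2, ha0]
    field_simp
    ring
  -- identify the telescoping sum with the payoff sums
  have hterm : ∀ t : ℕ,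
      (lam ^ 2) ^ t * a t - (lam ^ 2) ^ (t + 1) * a (t + 1)
        - (1 - lam ^ 2) * K * (lam ^ 2) ^ t
      = α * (lam ^ (2 * t) * ∫ q, (fX q.1 + lam * gX q.2) ∂(ν t))
        + β * (lam ^ (2 * t) * ∫ q, (fY q.1 + lam * gY q.2) ∂(ν t))
        + γ * (1 + lam) * (lam ^ 2) ^ t := by
    intro t
    have h := hround t
    simp only [pow_mul]
    linear_combination (-((lam ^ 2) ^ t)) * h
  have hS : α * (∑' t : ℕ, lam ^ (2 * t) * ∫ q, (fX q.1 + lam * gX q.2) ∂(ν t))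
      + β * (∑' t : ℕ, lam ^ (2 * t) * ∫ q, (fY q.1 + lam * gY q.2) ∂(ν t))
      + γ * (1 + lam) * (1 - lam ^ 2)⁻¹ = 0 := by
    have := htel
    rw [tsum_congr hterm] at this
    rw [Summable.tsum_add ((hSumX.mul_left α).add (hSumY.mul_left β)) (hgeo.mul_left (γ * (1 + lam))),
      Summable.tsum_add (hSumX.mul_left α) (hSumY.mul_left β), tsum_mul_left, tsum_mul_left,
      tsum_mul_left, tsum_geometric_of_lt_one hr0 hr1] at this
    linarith [this]
  have hne : (1 : ℝ) - lam ^ 2 ≠ 0 := by nlinarith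
  have hinv : (1 - lam ^ 2) * (1 - lam ^ 2)⁻¹ = 1 := mul_inv_cancel₀ hne
  linear_combination (1 - lam) * hS - γ * hinv
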